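/- Let p, q, r be rational numbers with p ≠ q, q ≠ r, p ≠ r and p, q, r all nonzero. Define P = pr(p-q)(q-r)/(q(p-r)²), Q = qr(q-p)(p-r)/(p(q-r)²), R = pq(p-r)(r-q)/(r(p-q)²). Then for any rational t, σ₃(t, P, Q, R) = σ₃(t, p, q, r) and σ₄(t, P, Q, R) = σ₄(t, p, q, r); equivalently PQ + QR + RP = pq + qr + rp and PQR = pqr. -/

import Mathlib

/-- The `k`-th elementary symmetric function of a multiset of rationals
(`esymm s 0 = 1`, and `esymm s k = 0` for `k > card s`). -/
def esymm (s : Multiset ℚ) (k : ℕ) : ℚ := ((s.powersetCard k).map Multiset.prod).sum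

/-- Elementary symmetric function with integer index: `0` for negative indices. -/
def esymmZ (s : Multiset ℚ) (k : ℤ) : ℚ := if k < 0 then 0 else esymm s k.toNat

/-- The `k`-th elementary symmetric polynomial evaluated at a tuple. -/
def sigma {n : ℕ} (x : Fin n → ℚ) (k : ℕ) : ℚ := esymm (Multiset.map x Finset.univ.val) k


lemma pc1 (d : ℚ) : Multiset.powersetCard 1 {d} = {{d}} := by
  rw [show ({d} : Multiset ℚ) = d ::ₘ 0 from rfl, Multiset.powersetCard_cons]; simp [Multiset.powersetCard_zero_right]

lemma esymm3 (a b c d : ℚ) : esymm {a,b,c,d} 3 = a*b*c + a*b*d + a*c*d + b*c*d := by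
  simp [esymm, Multiset.powersetCard_cons, pc1]; ring

lemma esymm4 (a b c d : ℚ) : esymm {a,b,c,d} 4 = a*b*c*d := by
  simp [esymm, Multiset.powersetCard_cons, pc1]; ring

theorem stmt7 (p q r : ℚ) (hpq : p ≠ q) (hqr : q ≠ r) (hpr : p ≠ r)
    (hp : p ≠ 0) (hq : q ≠ 0) (hr : r ≠ 0) :
    let P := p * r * (p - q) * (q - r) / (q * (p - r) ^ 2)
    let Q := q * r * (q - p) * (p - r) / (p * (q - r) ^ 2)
    let R := p * q * (p - r) * (r - q) / (r * (p - q) ^ 2)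
    (∀ t : ℚ, esymm {t, P, Q, R} 3 = esymm {t, p, q, r} 3 ∧
      esymm {t, P, Q, R} 4 = esymm {t, p, q, r} 4) ∧
    P * Q + Q * R + R * P = p * q + q * r + r * p ∧ P * Q * R = p * q * r := by
  intro P Q R
  have h1 : p - q ≠ 0 := sub_ne_zero.mpr hpq
  have h2 : q - r ≠ 0 := sub_ne_zero.mpr hqr
  have h3 : p - r ≠ 0 := sub_ne_zero.mpr hpr
  have he2 : P * Q + Q * R + R * P = p * q + q * r + r * p := by
    simp only [P, Q, R]
    field_simp
    ring
  have he3 : P * Q * R = p * q * r := by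
    simp only [P, Q, R]
    field_simp
    ring
  refine ⟨fun t => ⟨?_, ?_⟩, he2, he3⟩
  · rw [esymm3, esymm3]
    linear_combination t * he2 + he3
  · rw [esymm4, esymm4]
    linear_combination t * he3
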